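/- Let m, β_1 be positive integers with m < β_1, and let (a_j)_{j ≥ β_1+1} be real numbers. Let t̃(t) = t + Σ_{k≥2} c_k t^k be the unique formal power series with leading term t satisfying t̃(t)^{β_1−m} = t^{β_1−m} + Σ_{j=β_1+1}^∞ a_j t^{j−m}, and let t(t̃) = t̃ + Σ_{k=2}^∞ b_k t̃^k be its compositional inverse. Then for every k ≥ 2, b_k = −a_{k+β_1−1}/(β_1 − m) + P_k(a_{β_1+1}, …, a_{k+β_1−2}), where P_k is a polynomial with rational coefficients depending only on k, m and β_1, and every monomial (a_{β_1+j_1})^{α_1} ⋯ (a_{β_1+j_r})^{α_r} appearing with nonzero coefficient in P_k satisfies α_1 j_1 + ⋯ + α_r j_r = k − 1. (The lemma in the proof of Proposition 4.2 of the paper.) -/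

import Mathlib

/-- Composition `F ∘ G` of formal power series (the correct composition whenever the constant
term of `G` vanishes: then `coeff k (G^n) = 0` for `n > k`, so the truncated sum below is the
full substitution). -/
noncomputable def pscomp (F G : PowerSeries ℝ) : PowerSeries ℝ :=
  PowerSeries.mk fun k =>
    ∑ n ∈ Finset.range (k + 1), PowerSeries.coeff n F * PowerSeries.coeff k (G ^ n)

open PowerSeries MvPolynomial

noncomputable abbrev RR := MvPolynomial ℕ ℚ

/-- coefficients of the universal `d`-th root `U = (1 + ∑_{N≥1} X_N t^N)^{1/d}`. -/
noncomputable def uco (d : ℕ) : ℕ → RR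
  | 0 => 1
  | (N+1) =>
      MvPolynomial.C ((d : ℚ)⁻¹) *
        (MvPolynomial.X (N+1) -
          PowerSeries.coeff (N+1)
            ((PowerSeries.mk fun i => if h : i ≤ N then uco d i else 0) ^ d))
  decreasing_by omega

/-- universal root series. -/
noncomputable def Us (d : ℕ) : PowerSeries RR := PowerSeries.mk (uco d)

/-- truncation of `Us`. -/
noncomputable def Vs (d N : ℕ) : PowerSeries RR :=
  PowerSeries.mk fun i => if i ≤ N then uco d i else 0

lemma uco_zero (d : ℕ) : uco d 0 = 1 := by simp [uco]

lemma uco_succ (d N : ℕ) :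
    uco d (N+1) = MvPolynomial.C ((d : ℚ)⁻¹) *
      (MvPolynomial.X (N+1) - PowerSeries.coeff (N+1) ((Vs d N) ^ d)) := by
  rw [uco]
  have : (PowerSeries.mk fun i => if h : i ≤ N then uco d i else 0) = Vs d N := by
    unfold Vs; simp only [dite_eq_ite]
  rw [this]

lemma coeff_pow_congr {S : Type*} [CommRing S] (A A' : PowerSeries S) (N e : ℕ)
    (h : ∀ i ≤ N, PowerSeries.coeff i A = PowerSeries.coeff i A') :
    PowerSeries.coeff N (A ^ e) = PowerSeries.coeff N (A' ^ e) := by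
  induction e generalizing N with
  | zero => simp
  | succ e ih =>
      rw [pow_succ, pow_succ, PowerSeries.coeff_mul, PowerSeries.coeff_mul]
      refine Finset.sum_congr rfl fun p hp => ?_
      rw [Finset.HasAntidiagonal.mem_antidiagonal] at hp
      rw [ih p.1 (fun i hi => h i (by omega)), h p.2 (by omega)]

lemma coeff_Vs (d N i : ℕ) :
    PowerSeries.coeff i (Vs d N) = if i ≤ N then uco d i else 0 := by
  simp [Vs]

lemma coeff_Us (d i : ℕ) : PowerSeries.coeff i (Us d) = uco d i := by simp [Us]

lemma constantCoeff_Vs (d N : ℕ) : PowerSeries.constantCoeff (Vs d N) = 1 := by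
  rw [← PowerSeries.coeff_zero_eq_constantCoeff, coeff_Vs]
  simp [uco_zero]

lemma Vs_succ (d N : ℕ) :
    Vs d (N+1) = Vs d N + PowerSeries.monomial (N+1) (uco d (N+1)) := by
  ext i
  rw [map_add, coeff_Vs, coeff_Vs, PowerSeries.coeff_monomial]
  rcases lt_trichotomy i (N+1) with h | h | h
  · rw [if_pos (by omega), if_pos (by omega), if_neg (by omega), add_zero]
  · subst h; rw [if_pos le_rfl, if_neg (by omega), if_pos rfl, zero_add]
  · rw [if_neg (by omega), if_neg (by omega), if_neg (by omega), add_zero]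

lemma coeff_pow_Vs_succ (d N : ℕ) (hd : 1 ≤ d) :
    PowerSeries.coeff (N+1) ((Vs d (N+1)) ^ d) =
      PowerSeries.coeff (N+1) ((Vs d N) ^ d) + d * uco d (N+1) := by
  have hVs : Vs d (N+1) = Vs d N + PowerSeries.C (uco d (N+1)) * PowerSeries.X ^ (N+1) := by
    rw [Vs_succ]
    congr 1
    rw [PowerSeries.X_pow_eq]
    ext i
    simp only [PowerSeries.coeff_monomial, PowerSeries.coeff_C_mul]
    split <;> simp
  set c := uco d (N+1) with hc
  set A := Vs d N with hA
  rw [hVs, add_pow, map_sum]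
  have key : ∀ k ∈ Finset.range (d+1),
      PowerSeries.coeff (N+1)
        (A ^ k * (PowerSeries.C c * PowerSeries.X ^ (N+1)) ^ (d-k) * ((d.choose k : ℕ) : RR⟦X⟧)) =
      (if k = d then PowerSeries.coeff (N+1) (A ^ d) else 0)
      + (if k = d - 1 then (d : RR) * c else 0) := by
    intro k hk
    rw [Finset.mem_range] at hk
    rw [mul_pow, ← map_pow, ← pow_mul]
    rcases eq_or_ne k d with rfl | hkd
    · rw [if_pos rfl, if_neg (by omega)]
      simp
    · rw [if_neg hkd]
      have hrw : A ^ k * (PowerSeries.C (c ^ (d-k)) * PowerSeries.X ^ ((N+1)*(d-k)))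
            * ((d.choose k : ℕ) : RR⟦X⟧)
          = (A ^ k * PowerSeries.C (c ^ (d-k)) * ((d.choose k : ℕ) : RR⟦X⟧))
            * PowerSeries.X ^ ((N+1)*(d-k)) := by ring
      rw [hrw, PowerSeries.coeff_mul_X_pow']
      rcases eq_or_ne k (d-1) with rfl | hk1
      · have h1 : d - (d-1) = 1 := by omega
        rw [if_pos rfl, h1]
        rw [if_pos (by omega : (N+1)*1 ≤ N+1)]
        have h2 : N + 1 - (N+1)*1 = 0 := by omega
        rw [h2, PowerSeries.coeff_zero_eq_constantCoeff]
        rw [map_mul, map_mul, map_pow]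
        rw [constantCoeff_Vs]
        have hch : d.choose (d-1) = d := by
          rw [Nat.choose_symm hd, Nat.choose_one_right]
        simp [hch, mul_comm]
      · rw [if_neg hk1, if_neg (by
          have : 2 ≤ d - k := by omega
          have : 2*(N+1) ≤ (N+1)*(d-k) := by nlinarith
          omega), zero_add]
  rw [Finset.sum_congr rfl key, Finset.sum_add_distrib,
    Finset.sum_ite_eq' (Finset.range (d+1)) d,
    Finset.sum_ite_eq' (Finset.range (d+1)) (d-1)]
  rw [if_pos (by simp), if_pos (by simp [Finset.mem_range])]

lemma coeff_pow_Us_eq_Vs (d N e : ℕ) :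
    PowerSeries.coeff N ((Us d) ^ e) = PowerSeries.coeff N ((Vs d N) ^ e) :=
  coeff_pow_congr _ _ _ _ (fun i hi => by rw [coeff_Us, coeff_Vs, if_pos hi])

lemma coeff_Us_pow_d (d : ℕ) (hd : 1 ≤ d) (N : ℕ) :
    PowerSeries.coeff N ((Us d) ^ d) =
      if N = 0 then 1 else MvPolynomial.X N := by
  cases N with
  | zero =>
      rw [if_pos rfl, PowerSeries.coeff_zero_eq_constantCoeff, map_pow]
      have : PowerSeries.constantCoeff (Us d) = 1 := by
        rw [← PowerSeries.coeff_zero_eq_constantCoeff, coeff_Us, uco_zero]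
      rw [this, one_pow]
  | succ N =>
      rw [if_neg (by omega)]
      rw [coeff_pow_Us_eq_Vs, coeff_pow_Vs_succ d N hd, uco_succ]
      have hd' : (d : ℚ) ≠ 0 := by exact_mod_cast by omega
      have hcast : ((d : ℕ) : RR) = MvPolynomial.C ((d : ℚ)) := by
        simp [MvPolynomial.C_eq_coe_nat]
      rw [hcast, ← mul_assoc, ← MvPolynomial.C_mul, mul_inv_cancel₀ hd',
        MvPolynomial.C_1, one_mul]
      ring

/-- weighted homogeneity of weight `w`, with all variables positive. -/
def Wt (w : ℕ) (p : RR) : Prop :=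
  ∀ m ∈ p.support, (m.sum fun j α => j * α) = w ∧ ∀ j ∈ m.support, j ≠ 0

/-- all variables bounded by `Bd`. -/
def VB (Bd : ℕ) (p : RR) : Prop :=
  ∀ m ∈ p.support, ∀ j ∈ m.support, j ≤ Bd

lemma wtm_eq (m : ℕ →₀ ℕ) : (m.sum fun j α => j * α) = ∑ j ∈ m.support, j * m j := rfl

lemma wtm_add (m₁ m₂ : ℕ →₀ ℕ) :
    ((m₁ + m₂).sum fun j α => j * α) =
      (m₁.sum fun j α => j * α) + (m₂.sum fun j α => j * α) := by
  rw [Finsupp.sum_add_index] <;> simp [Nat.mul_add]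

lemma Wt.zero (w : ℕ) : Wt w 0 := by intro m hm; simp at hm

lemma Wt.one : Wt 0 1 := by
  intro m hm
  rw [MvPolynomial.mem_support_iff, MvPolynomial.coeff_one] at hm
  have hm0 : m = 0 := by by_contra h; simp [Ne.symm h] at hm
  subst hm0
  simp

lemma Wt.add {w : ℕ} {p q : RR} (hp : Wt w p) (hq : Wt w q) : Wt w (p + q) := by
  intro m hm
  rcases Finset.mem_union.1 (MvPolynomial.support_add hm) with h | h
  · exact hp m h
  · exact hq m h

lemma Wt.neg {w : ℕ} {p : RR} (hp : Wt w p) : Wt w (-p) := by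
  intro m hm
  exact hp m (by simpa using hm)

lemma Wt.C_mul {w : ℕ} {p : RR} (c : ℚ) (hp : Wt w p) : Wt w (MvPolynomial.C c * p) := by
  intro m hm
  apply hp m
  rw [MvPolynomial.C_mul'] at hm
  exact MvPolynomial.support_smul hm

lemma Wt.mul {w₁ w₂ : ℕ} {p q : RR} (hp : Wt w₁ p) (hq : Wt w₂ q) : Wt (w₁ + w₂) (p * q) := by
  classical
  intro m hm
  obtain ⟨m₁, h₁, m₂, h₂, rfl⟩ := Finset.mem_add.1 (MvPolynomial.support_mul p q hm)
  obtain ⟨e₁, v₁⟩ := hp m₁ h₁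
  obtain ⟨e₂, v₂⟩ := hq m₂ h₂
  constructor
  · rw [wtm_add, e₁, e₂]
  · intro j hj
    rcases Finset.mem_union.1 (Finsupp.support_add hj) with h | h
    · exact v₁ j h
    · exact v₂ j h

lemma Wt.sum {ι : Type*} {w : ℕ} {s : Finset ι} {f : ι → RR} (h : ∀ i ∈ s, Wt w (f i)) :
    Wt w (∑ i ∈ s, f i) := by
  classical
  induction s using Finset.induction with
  | empty => simpa using Wt.zero w
  | insert _ _ hx ih =>
      rw [Finset.sum_insert hx]
      exact (h _ (Finset.mem_insert_self _ _)).add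
        (ih fun i hi => h i (Finset.mem_insert_of_mem hi))

lemma Wt.X (n : ℕ) (hn : n ≠ 0) : Wt n (MvPolynomial.X n : RR) := by
  intro m hm
  have : m = Finsupp.single n 1 := by
    simpa [MvPolynomial.support_X] using hm
  subst this
  constructor
  · simp [Finsupp.sum_single_index]
  · intro j hj
    have : j = n := by simpa [Finsupp.support_single_ne_zero n one_ne_zero] using hj
    omega

lemma VB.zero (Bd : ℕ) : VB Bd 0 := by intro m hm; simp at hm

lemma VB.one (Bd : ℕ) : VB Bd 1 := by
  intro m hm
  rw [MvPolynomial.mem_support_iff, MvPolynomial.coeff_one] at hm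
  have hm0 : m = 0 := by by_contra h; simp [Ne.symm h] at hm
  subst hm0
  simp

lemma VB.add {Bd : ℕ} {p q : RR} (hp : VB Bd p) (hq : VB Bd q) : VB Bd (p + q) := by
  intro m hm
  rcases Finset.mem_union.1 (MvPolynomial.support_add hm) with h | h
  · exact hp m h
  · exact hq m h

lemma VB.neg {Bd : ℕ} {p : RR} (hp : VB Bd p) : VB Bd (-p) := by
  intro m hm
  exact hp m (by simpa using hm)

lemma VB.C_mul {Bd : ℕ} {p : RR} (c : ℚ) (hp : VB Bd p) : VB Bd (MvPolynomial.C c * p) := by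
  intro m hm
  apply hp m
  rw [MvPolynomial.C_mul'] at hm
  exact MvPolynomial.support_smul hm

lemma VB.mul {Bd : ℕ} {p q : RR} (hp : VB Bd p) (hq : VB Bd q) : VB Bd (p * q) := by
  classical
  intro m hm
  obtain ⟨m₁, h₁, m₂, h₂, rfl⟩ := Finset.mem_add.1 (MvPolynomial.support_mul p q hm)
  intro j hj
  rcases Finset.mem_union.1 (Finsupp.support_add hj) with h | h
  · exact hp m₁ h₁ j h
  · exact hq m₂ h₂ j h

lemma VB.sum {ι : Type*} {Bd : ℕ} {s : Finset ι} {f : ι → RR} (h : ∀ i ∈ s, VB Bd (f i)) :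
    VB Bd (∑ i ∈ s, f i) := by
  classical
  induction s using Finset.induction with
  | empty => simpa using VB.zero Bd
  | insert _ _ hx ih =>
      rw [Finset.sum_insert hx]
      exact (h _ (Finset.mem_insert_self _ _)).add
        (ih fun i hi => h i (Finset.mem_insert_of_mem hi))

lemma VB.mono {Bd Bd' : ℕ} {p : RR} (h : Bd ≤ Bd') (hp : VB Bd p) : VB Bd' p :=
  fun m hm j hj => le_trans (hp m hm j hj) h

lemma VB.X (n Bd : ℕ) (hn : n ≤ Bd) : VB Bd (MvPolynomial.X n : RR) := by
  intro m hm
  have : m = Finsupp.single n 1 := by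
    simpa [MvPolynomial.support_X] using hm
  subst this
  intro j hj
  have : j = n := by simpa [Finsupp.support_single_ne_zero n one_ne_zero] using hj
  omega

/-- weight of coefficients of powers of a series with weighted coefficients. -/
lemma Wt.coeff_pow {A : PowerSeries RR} (hA : ∀ i, Wt i (PowerSeries.coeff i A))
    (e : ℕ) : ∀ K, Wt K (PowerSeries.coeff K (A ^ e)) := by
  induction e with
  | zero =>
      intro K
      rcases Nat.eq_zero_or_pos K with rfl | hK
      · simpa using Wt.one
      · rw [pow_zero, PowerSeries.coeff_one, if_neg (by omega)]
        exact Wt.zero K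
  | succ e ih =>
      intro K
      rw [pow_succ, PowerSeries.coeff_mul]
      have : ∀ p ∈ Finset.HasAntidiagonal.antidiagonal K,
          Wt K (PowerSeries.coeff p.1 (A ^ e) * PowerSeries.coeff p.2 A) := by
        intro p hp
        rw [Finset.HasAntidiagonal.mem_antidiagonal] at hp
        rw [← hp]
        exact (ih p.1).mul (hA p.2)
      classical
      exact Wt.sum this

lemma VB.coeff_pow {A : PowerSeries RR} {Bd : ℕ}
    (e : ℕ) : ∀ K, (∀ i ≤ K, VB Bd (PowerSeries.coeff i A)) →
      VB Bd (PowerSeries.coeff K (A ^ e)) := by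
  induction e with
  | zero =>
      intro K _
      rcases Nat.eq_zero_or_pos K with rfl | hK
      · simpa using VB.one Bd
      · rw [pow_zero, PowerSeries.coeff_one, if_neg (by omega)]
        exact VB.zero Bd
  | succ e ih =>
      intro K hA
      rw [pow_succ, PowerSeries.coeff_mul]
      refine VB.sum fun p hp => ?_
      rw [Finset.HasAntidiagonal.mem_antidiagonal] at hp
      exact (ih p.1 (fun i hi => hA i (by omega))).mul (hA p.2 (by omega))

/-- weight and variable bound for the universal root coefficients. -/
lemma wt_uco (d : ℕ) : ∀ N, Wt N (uco d N) ∧ VB N (uco d N) := by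
  intro N
  induction N using Nat.strong_induction_on with
  | _ N ih =>
      cases N with
      | zero => rw [uco_zero]; exact ⟨Wt.one, VB.one 0⟩
      | succ N =>
          rw [uco_succ]
          have hWc : ∀ i, Wt i (PowerSeries.coeff i (Vs d N)) := by
            intro i
            rw [coeff_Vs]
            split
            · exact (ih i (by omega)).1
            · exact Wt.zero i
          have hW : Wt (N+1) (PowerSeries.coeff (N+1) ((Vs d N) ^ d)) :=
            Wt.coeff_pow hWc d (N+1)
          have hV : VB (N+1) (PowerSeries.coeff (N+1) ((Vs d N) ^ d)) := by
            refine VB.coeff_pow d (N+1) fun i hi => ?_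
            rw [coeff_Vs]
            split
            · exact (VB.mono (by omega) (ih i (by omega)).2)
            · exact VB.zero _
          rw [sub_eq_add_neg]
          constructor
          · exact Wt.C_mul _ ((Wt.X (N+1) (by omega)).add hW.neg)
          · exact VB.C_mul _ ((VB.X (N+1) (N+1) le_rfl).add hV.neg)

/-- sharper: the coefficient of `X_{N+1}` does not occur in `coeff (N+1) (Vs d N ^ d)`. -/
lemma lead_uco (d : ℕ) (N : ℕ) (hN : 1 ≤ N) :
    MvPolynomial.coeff (Finsupp.single N 1) (uco d N) = (d : ℚ)⁻¹ := by
  obtain ⟨N, rfl⟩ : ∃ N', N = N' + 1 := ⟨N - 1, by omega⟩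
  rw [uco_succ, MvPolynomial.coeff_C_mul, MvPolynomial.coeff_sub]
  have h1 : MvPolynomial.coeff (Finsupp.single (N+1) 1) (MvPolynomial.X (N+1) : RR) = 1 := by
    rw [MvPolynomial.coeff_X, if_pos rfl]
  have h2 : MvPolynomial.coeff (Finsupp.single (N+1) 1)
      (PowerSeries.coeff (N+1) ((Vs d N) ^ d)) = 0 := by
    by_contra h
    have hmem := MvPolynomial.mem_support_iff.2 h
    have hV : VB N (PowerSeries.coeff (N+1) ((Vs d N) ^ d)) := by
      refine VB.coeff_pow d (N+1) fun i hi => ?_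
      rw [coeff_Vs]
      split
      · rename_i hiN
        exact VB.mono hiN (wt_uco d i).2
      · exact VB.zero _
    have := hV _ hmem (N+1) (by
      rw [Finsupp.support_single_ne_zero _ one_ne_zero]; simp)
    omega
  rw [h1, h2, sub_zero, mul_one]

/-- universal series `t̃(t)`. -/
noncomputable def Tu (d : ℕ) : PowerSeries RR := PowerSeries.X * Us d

lemma coeff_Tu_pow (d n K : ℕ) :
    PowerSeries.coeff K ((Tu d) ^ n) =
      if n ≤ K then PowerSeries.coeff (K - n) ((Us d) ^ n) else 0 := by
  rw [Tu, mul_pow, PowerSeries.coeff_X_pow_mul']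

/-- universal inverse-series coefficients. -/
noncomputable def bpoly (d : ℕ) : ℕ → RR
  | 0 => 0
  | 1 => 1
  | (k+2) => - ∑ n ∈ (Finset.range (k+2)).attach,
      bpoly d n.1 * PowerSeries.coeff (k+2) ((Tu d) ^ n.1)
  decreasing_by exact (Finset.mem_range.1 n.2)

lemma bpoly_two_le (d k : ℕ) (hk : 2 ≤ k) :
    bpoly d k = - ∑ n ∈ Finset.range k,
      bpoly d n * PowerSeries.coeff k ((Tu d) ^ n) := by
  obtain ⟨k', rfl⟩ : ∃ k', k = k' + 2 := ⟨k - 2, by omega⟩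
  rw [bpoly]
  congr 1
  rw [← Finset.sum_attach (Finset.range (k'+2))]

lemma wt_bpoly (d : ℕ) : ∀ k, 1 ≤ k → Wt (k-1) (bpoly d k) ∧ VB (k-1) (bpoly d k) := by
  intro k
  induction k using Nat.strong_induction_on with
  | _ k ih =>
      intro hk
      rcases eq_or_ne k 1 with rfl | hk1
      · rw [show bpoly d 1 = 1 by rw [bpoly]]
        exact ⟨Wt.one, VB.one 0⟩
      · have hk2 : 2 ≤ k := by omega
        rw [bpoly_two_le d k hk2]
        have : ∀ n ∈ Finset.range k,
            Wt (k-1) (bpoly d n * PowerSeries.coeff k ((Tu d) ^ n)) ∧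
            VB (k-1) (bpoly d n * PowerSeries.coeff k ((Tu d) ^ n)) := by
          intro n hn
          rw [Finset.mem_range] at hn
          rcases Nat.eq_zero_or_pos n with rfl | hn1
          · rw [show bpoly d 0 = 0 by rw [bpoly], zero_mul]
            exact ⟨Wt.zero _, VB.zero _⟩
          · rw [coeff_Tu_pow, if_pos (by omega)]
            have hU : Wt (k-n) (PowerSeries.coeff (k-n) ((Us d) ^ n)) := by
              refine Wt.coeff_pow (fun i => ?_) n (k-n)
              rw [coeff_Us]; exact (wt_uco d i).1
            have hUV : VB (k-n) (PowerSeries.coeff (k-n) ((Us d) ^ n)) := by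
              refine VB.coeff_pow n (k-n) fun i hi => ?_
              rw [coeff_Us]; exact VB.mono hi (wt_uco d i).2
            obtain ⟨hW, hV⟩ := ih n hn hn1
            constructor
            · have := hW.mul hU
              have he : (n-1) + (k-n) = k-1 := by omega
              rwa [he] at this
            · exact (VB.mono (by omega) hV).mul (VB.mono (by omega) hUV)
        constructor
        · exact (Wt.sum fun n hn => (this n hn).1).neg
        · exact (VB.sum fun n hn => (this n hn).2).neg

lemma coeff_single_one_mul {p q : RR} {w₁ w₂ : ℕ} (hp : Wt w₁ p) (hq : Wt w₂ q)
    (h₁ : 1 ≤ w₁) (h₂ : 1 ≤ w₂) (j : ℕ) :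
    MvPolynomial.coeff (Finsupp.single j 1) (p * q) = 0 := by
  classical
  by_contra h
  obtain ⟨m₁, hm₁, m₂, hm₂, heq⟩ :=
    Finset.mem_add.1 (MvPolynomial.support_mul p q (MvPolynomial.mem_support_iff.2 h))
  obtain ⟨e₁, v₁⟩ := hp m₁ hm₁
  obtain ⟨e₂, v₂⟩ := hq m₂ hm₂
  have hm₁0 : m₁ ≠ 0 := by rintro rfl; simp [Finsupp.sum] at e₁; omega
  have hm₂0 : m₂ ≠ 0 := by rintro rfl; simp [Finsupp.sum] at e₂; omega
  obtain ⟨x₁, hx₁⟩ := Finsupp.ne_iff.1 hm₁0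
  obtain ⟨x₂, hx₂⟩ := Finsupp.ne_iff.1 hm₂0
  simp only [Finsupp.coe_zero, Pi.zero_apply] at hx₁ hx₂
  have happ : ∀ x, m₁ x + m₂ x = (Finsupp.single j 1 : ℕ →₀ ℕ) x := by
    intro x; rw [← heq]; rfl
  have h₁' := happ x₁
  have h₂' := happ x₂
  have hs : ∀ x, (Finsupp.single j 1 : ℕ →₀ ℕ) x ≤ 1 := by
    intro x
    rcases eq_or_ne x j with rfl | hx
    · simp
    · simp [Finsupp.single_apply, Ne.symm hx]
  have hx₁j : x₁ = j := by
    by_contra hc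
    have := happ x₁
    simp [Finsupp.single_apply, Ne.symm hc] at this
    omega
  have hx₂j : x₂ = j := by
    by_contra hc
    have := happ x₂
    simp [Finsupp.single_apply, Ne.symm hc] at this
    omega
  subst hx₁j
  rw [hx₂j] at hx₂
  have := happ x₁
  simp [Finsupp.single_apply] at this
  omega

lemma lead_bpoly (d : ℕ) (hd : 1 ≤ d) (k : ℕ) (hk : 2 ≤ k) :
    MvPolynomial.coeff (Finsupp.single (k-1) 1) (bpoly d k) = -(d : ℚ)⁻¹ := by
  rw [bpoly_two_le d k hk, MvPolynomial.coeff_neg, MvPolynomial.coeff_sum]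
  rw [Finset.sum_eq_single 1]
  · rw [show bpoly d 1 = 1 by rw [bpoly], one_mul, pow_one, Tu]
    rw [show PowerSeries.X * Us d = PowerSeries.X ^ 1 * Us d by rw [pow_one],
      PowerSeries.coeff_X_pow_mul', if_pos (by omega : 1 ≤ k), coeff_Us]
    rw [lead_uco d (k-1) (by omega)]
  · intro n hn hn1
    rw [Finset.mem_range] at hn
    rcases Nat.eq_zero_or_pos n with rfl | hnpos
    · rw [show bpoly d 0 = 0 by rw [bpoly], zero_mul, MvPolynomial.coeff_zero]
    · have hn2 : 2 ≤ n := by omega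
      rw [coeff_Tu_pow, if_pos (by omega)]
      refine coeff_single_one_mul (wt_bpoly d n (by omega)).1
        (Wt.coeff_pow (fun i => by rw [coeff_Us]; exact (wt_uco d i).1) n (k-n))
        (by omega) (by omega) _
  · intro h
    exact absurd (Finset.mem_range.2 (by omega)) h

lemma root_unique {A B : PowerSeries ℝ} {d : ℕ} (hd : 1 ≤ d)
    (hA : PowerSeries.constantCoeff A = 1) (hB : PowerSeries.constantCoeff B = 1)
    (h : A ^ d = B ^ d) : A = B := by
  have hfac := geom_sum₂_mul A B d
  rw [h, sub_self] at hfac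
  rcases mul_eq_zero.1 hfac with h0 | h0
  · exfalso
    have : PowerSeries.constantCoeff
        (∑ i ∈ Finset.range d, A ^ i * B ^ (d - 1 - i)) = d := by
      rw [map_sum]
      have : ∀ i ∈ Finset.range d,
          PowerSeries.constantCoeff (A ^ i * B ^ (d-1-i)) = 1 := by
        intro i hi
        rw [map_mul, map_pow, map_pow, hA, hB, one_pow, one_pow, one_mul]
      rw [Finset.sum_congr rfl this, Finset.sum_const, Finset.card_range, nsmul_eq_mul, mul_one]
    rw [h0, map_zero] at this
    have : (d : ℝ) ≠ 0 := by exact_mod_cast (by omega : d ≠ 0)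
    simp_all
  · exact sub_eq_zero.1 h0

section realside

variable (m β₁ : ℕ) (a : ℕ → ℝ)

/-- the specialization homomorphism. -/
noncomputable def φh (β₁ : ℕ) (a : ℕ → ℝ) : RR →+* ℝ :=
  (MvPolynomial.aeval fun j => a (β₁ + j) : RR →ₐ[ℚ] ℝ).toRingHom

lemma T_eq (hm : 1 ≤ m) (hmβ : m < β₁) (T : PowerSeries ℝ)
    (hT0 : PowerSeries.coeff 0 T = 0) (hT1 : PowerSeries.coeff 1 T = 1)
    (hT3 : T ^ (β₁ - m) = PowerSeries.mk (fun n => if n = β₁ - m then 1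
      else if β₁ < n + m then a (n + m) else 0)) :
    T = PowerSeries.map (φh β₁ a) (Tu (β₁ - m)) := by
  set d := β₁ - m with hdd
  have hd : 1 ≤ d := by omega
  set Ur : PowerSeries ℝ := PowerSeries.mk fun n => PowerSeries.coeff (n+1) T with hUr
  have hTX : T = PowerSeries.X * Ur := by
    ext n
    cases n with
    | zero =>
        rw [hT0, PowerSeries.coeff_zero_eq_constantCoeff, map_mul,
          PowerSeries.constantCoeff_X, zero_mul]
    | succ n => rw [PowerSeries.coeff_succ_X_mul, hUr, PowerSeries.coeff_mk]
  have hG : PowerSeries.map (φh β₁ a) ((Us d) ^ d) =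
      PowerSeries.mk fun N => if N = 0 then 1 else a (β₁ + N) := by
    ext N
    rw [PowerSeries.coeff_map, coeff_Us_pow_d d hd, PowerSeries.coeff_mk]
    split
    · rw [map_one]
    · simp [φh]
  have hRHS : (PowerSeries.mk (fun n => if n = d then 1
      else if β₁ < n + m then a (n + m) else 0) : PowerSeries ℝ) =
      PowerSeries.X ^ d * PowerSeries.mk fun N => if N = 0 then 1 else a (β₁ + N) := by
    ext n
    rw [PowerSeries.coeff_mk, PowerSeries.coeff_X_pow_mul', PowerSeries.coeff_mk]
    by_cases hnd : n = d
    · subst hnd; rw [if_pos rfl, if_pos le_rfl, if_pos (by omega)]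
    · rw [if_neg hnd]
      by_cases hle : d ≤ n
      · rw [if_pos hle, if_pos (by omega : β₁ < n + m), if_neg (by omega : ¬ n - d = 0)]
        congr 1
        omega
      · rw [if_neg (by omega : ¬ β₁ < n + m), if_neg hle]
  have hpow : Ur ^ d = (PowerSeries.map (φh β₁ a) (Us d)) ^ d := by
    have h1 : PowerSeries.X ^ d * Ur ^ d =
        PowerSeries.X ^ d * (PowerSeries.map (φh β₁ a) (Us d)) ^ d := by
      rw [← mul_pow, ← hTX, ← map_pow, hT3, hG, hRHS]
    exact mul_left_cancel₀ (pow_ne_zero d PowerSeries.X_ne_zero) h1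
  have hUrc : PowerSeries.constantCoeff Ur = 1 := by
    rw [← PowerSeries.coeff_zero_eq_constantCoeff, hUr, PowerSeries.coeff_mk, hT1]
  have hUc : PowerSeries.constantCoeff (PowerSeries.map (φh β₁ a) (Us d)) = 1 := by
    rw [← PowerSeries.coeff_zero_eq_constantCoeff, PowerSeries.coeff_map, coeff_Us,
      uco_zero, map_one]
  have := root_unique hd hUrc hUc hpow
  rw [hTX, this, Tu, map_mul, PowerSeries.map_X]

lemma B_coeff (hm : 1 ≤ m) (hmβ : m < β₁) (T B : PowerSeries ℝ)
    (hT1 : PowerSeries.coeff 1 T = 1)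
    (hT : T = PowerSeries.map (φh β₁ a) (Tu (β₁ - m)))
    (hB0 : PowerSeries.coeff 0 B = 0)
    (hcomp : pscomp B T = PowerSeries.X) :
    ∀ k, PowerSeries.coeff k B = φh β₁ a (bpoly (β₁ - m) k) := by
  set d := β₁ - m with hdd
  have hd : 1 ≤ d := by omega
  have hTn : ∀ n K, PowerSeries.coeff K (T ^ n) =
      φh β₁ a (PowerSeries.coeff K ((Tu d) ^ n)) := by
    intro n K
    rw [hT, ← map_pow, PowerSeries.coeff_map]
  have hkey : ∀ k, PowerSeries.coeff k (PowerSeries.X : PowerSeries ℝ) =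
      ∑ n ∈ Finset.range (k+1), PowerSeries.coeff n B * PowerSeries.coeff k (T ^ n) := by
    intro k
    rw [← hcomp, pscomp, PowerSeries.coeff_mk]
  intro k
  induction k using Nat.strong_induction_on with
  | _ k ih =>
      match k with
      | 0 => rw [hB0, show bpoly d 0 = 0 by rw [bpoly], map_zero]
      | 1 =>
          have h1 := hkey 1
          rw [PowerSeries.coeff_one_X] at h1
          rw [Finset.sum_range_succ, Finset.sum_range_one, pow_zero, pow_one] at h1
          rw [PowerSeries.coeff_one, if_neg one_ne_zero, mul_zero, zero_add, hT1,
            mul_one] at h1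
          rw [← h1, show bpoly d 1 = 1 by rw [bpoly], map_one]
      | (K+2) =>
          set k := K + 2 with hkk
          have h1 := hkey k
          rw [PowerSeries.coeff_X, if_neg (by omega)] at h1
          rw [Finset.sum_range_succ] at h1
          have hTkk : PowerSeries.coeff k (T ^ k) = 1 := by
            rw [hTn, coeff_Tu_pow, if_pos le_rfl, Nat.sub_self,
              PowerSeries.coeff_zero_eq_constantCoeff, map_pow]
            have : PowerSeries.constantCoeff (Us d) = 1 := by
              rw [← PowerSeries.coeff_zero_eq_constantCoeff, coeff_Us, uco_zero]
            rw [this, one_pow, map_one]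
          rw [hTkk, mul_one] at h1
          have h2 : PowerSeries.coeff k B =
              - ∑ n ∈ Finset.range k, PowerSeries.coeff n B * PowerSeries.coeff k (T ^ n) := by
            linarith [h1]
          rw [h2, bpoly_two_le d k (by omega), map_neg]
          congr 1
          rw [map_sum]
          refine Finset.sum_congr rfl fun n hn => ?_
          rw [Finset.mem_range] at hn
          rw [map_mul, ih n (by omega), hTn]

end realside

/-- **Lemma (in the proof of Proposition 4.2).**  Let `m < β₁` be positive integers and let
`(a_j)_{j ≥ β₁+1}` be real numbers.  Let `t̃(t) = t + Σ_{k≥2} c_k t^k` be the unique formal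
power series with leading term `t` such that
`t̃(t)^{β₁−m} = t^{β₁−m} + Σ_{j=β₁+1}^∞ a_j t^{j−m}`, and let `t(t̃) = t̃ + Σ_{k≥2} b_k t̃^k` be
its compositional inverse.  Then for every `k ≥ 2` there is a polynomial `P_k` with rational
coefficients, depending only on `k`, `m`, `β₁`, in the variables `a_{β₁+1}, …, a_{k+β₁−2}`
(variable `j` standing for `a_{β₁+j}`), all of whose monomials
`(a_{β₁+j₁})^{α₁} ⋯ (a_{β₁+j_r})^{α_r}` satisfy `α₁j₁ + ⋯ + α_r j_r = k − 1`, such that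
`b_k = −a_{k+β₁−1}/(β₁−m) + P_k(a_{β₁+1}, …, a_{k+β₁−2})`. -/
theorem lemma_prop42_inverse_series_coefficients
    (m β₁ : ℕ) (hm : 1 ≤ m) (hmβ : m < β₁) (k : ℕ) (hk : 2 ≤ k) :
    ∃ P : MvPolynomial ℕ ℚ,
      (∀ d ∈ P.support, ∀ j ∈ d.support, 1 ≤ j ∧ j ≤ k - 2) ∧
      (∀ d ∈ P.support, (d.sum fun j α => j * α) = k - 1) ∧
      ∀ (a : ℕ → ℝ) (T B : PowerSeries ℝ),
        PowerSeries.coeff 0 T = 0 →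
        PowerSeries.coeff 1 T = 1 →
        T ^ (β₁ - m) =
          PowerSeries.mk (fun n => if n = β₁ - m then 1
            else if β₁ < n + m then a (n + m) else 0) →
        PowerSeries.coeff 0 B = 0 →
        pscomp B T = PowerSeries.X →
        pscomp T B = PowerSeries.X →
        PowerSeries.coeff k B =
          - a (k + β₁ - 1) / ((β₁ : ℝ) - (m : ℝ)) +
            MvPolynomial.aeval (fun j => a (β₁ + j)) P := by
  classical
  set d := β₁ - m with hdd
  have hd : 1 ≤ d := by omega
  set P : RR := bpoly d k - MvPolynomial.C (-(d : ℚ)⁻¹) * MvPolynomial.X (k-1) with hP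
  have hWtP : Wt (k-1) P := by
    rw [hP, sub_eq_add_neg, ← neg_mul, ← MvPolynomial.C_neg]
    exact (wt_bpoly d k (by omega)).1.add (Wt.C_mul _ (Wt.X (k-1) (by omega)))
  have hc0 : MvPolynomial.coeff (Finsupp.single (k-1) 1) P = 0 := by
    rw [hP, MvPolynomial.coeff_sub, lead_bpoly d hd k hk, MvPolynomial.coeff_C_mul,
      MvPolynomial.coeff_X]
    simp
  refine ⟨P, ?_, fun dm hdm => (hWtP dm hdm).1, ?_⟩
  · intro dm hdm j hj
    obtain ⟨hsum, hpos⟩ := hWtP dm hdm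
    have hj0 : j ≠ 0 := hpos j hj
    have hdmj : 1 ≤ dm j := Nat.pos_of_ne_zero (Finsupp.mem_support_iff.1 hj)
    have hle : j * dm j ≤ k - 1 := by
      rw [← hsum, wtm_eq]
      exact Finset.single_le_sum (f := fun x => x * dm x) (fun x _ => Nat.zero_le _) hj
    refine ⟨by omega, ?_⟩
    by_contra hjk
    have hjle : j ≤ j * dm j := Nat.le_mul_of_pos_right j hdmj
    have hjeq : j = k - 1 := by omega
    have hdmj1 : dm j = 1 := by
      have h1 : j * dm j ≤ j * 1 := by rw [mul_one]; omega
      have h2 := Nat.le_of_mul_le_mul_left h1 (by omega : 0 < j)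
      omega
    have hdm_single : dm = Finsupp.single (k-1) 1 := by
      have hzero : ∀ x, x ≠ k - 1 → dm x = 0 := by
        intro x hx
        by_contra h0
        have hxmem : x ∈ dm.support := Finsupp.mem_support_iff.2 h0
        have hxe : x ∈ dm.support.erase (k-1) := Finset.mem_erase.2 ⟨hx, hxmem⟩
        have hmemk : k - 1 ∈ dm.support := by rw [← hjeq]; exact hj
        have hs := Finset.add_sum_erase dm.support (fun x => x * dm x) hmemk
        rw [← wtm_eq, hsum] at hs
        have hk1 : (k-1) * dm (k-1) = k - 1 := by
          rw [← hjeq, hdmj1, mul_one, hjeq]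
        rw [hk1] at hs
        have hsum0 : ∑ x ∈ dm.support.erase (k-1), x * dm x = 0 := by omega
        have := Finset.sum_eq_zero_iff.1 hsum0 x hxe
        have hx0 : x ≠ 0 := hpos x hxmem
        rcases Nat.mul_eq_zero.1 this with h | h
        · exact hx0 h
        · exact h0 h
      ext x
      rcases eq_or_ne x (k-1) with rfl | hx
      · rw [Finsupp.single_eq_same, ← hjeq, hdmj1]
      · rw [Finsupp.single_eq_of_ne hx, hzero x hx]
    rw [hdm_single] at hdm
    exact (MvPolynomial.mem_support_iff.1 hdm) hc0
  · intro a T B hT0 hT1 hT3 hB0 hBT hTB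
    have hTeq := T_eq m β₁ a hm hmβ T hT0 hT1 hT3
    have hB := B_coeff m β₁ a hm hmβ T B hT1 hTeq hB0 hBT k
    rw [hB]
    have hφ : ∀ p : RR, φh β₁ a p = MvPolynomial.aeval (fun j => a (β₁ + j)) p :=
      fun p => rfl
    have hsplit : bpoly d k = P + MvPolynomial.C (-(d : ℚ)⁻¹) * MvPolynomial.X (k-1) := by
      rw [hP]; ring
    rw [hsplit, map_add, hφ, hφ]
    rw [add_comm]
    congr 1
    rw [map_mul, MvPolynomial.aeval_C, MvPolynomial.aeval_X]
    have h1 : ((β₁ : ℝ) - (m : ℝ)) = (d : ℝ) := by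
      rw [hdd, Nat.cast_sub hmβ.le]
    have h2 : β₁ + (k-1) = k + β₁ - 1 := by omega
    have hd0 : (d : ℝ) ≠ 0 := by exact_mod_cast (by omega : d ≠ 0)
    rw [h2, h1]
    push_cast
    field_simp
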